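/- The total k-means cost of the spectral embedding with respect to the approximate centres is bounded by the spectral gap: Σ_{i=1}^k Σ_{u∈S_i} deg(u)·‖F(u) − p^(i)‖² ≤ k/Υ(k). -/

import Mathlib

open Finset
open scoped RealInnerProductSpace

/-- The volume of a vertex set: the sum of the degrees of its vertices. -/
noncomputable def gVol {V : Type*} (deg : V → ℝ) (S : Finset V) : ℝ := ∑ u ∈ S, deg u

/-- The total edge weight between two vertex sets. -/
noncomputable def gCut {V : Type*} (w : V → V → ℝ) (A B : Finset V) : ℝ :=
  ∑ u ∈ A, ∑ v ∈ B, w u v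

/-- The conductance of a vertex set. -/
noncomputable def gCond {V : Type*} [Fintype V] [DecidableEq V]
    (w : V → V → ℝ) (deg : V → ℝ) (S : Finset V) : ℝ :=
  gCut w S Sᶜ / min (gVol deg S) (gVol deg Sᶜ)

/-- `S : Fin k → Finset V` is a partition of `V` into `k` non-empty sets. -/
def IsPartition {V : Type*} [Fintype V] {k : ℕ} (S : Fin k → Finset V) : Prop :=
  (∀ i, (S i).Nonempty) ∧ (∀ i j, i ≠ j → Disjoint (S i) (S j)) ∧ ∀ v, ∃ i, v ∈ S i

/-- The vector `D^{1/2} χ_S`. -/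
noncomputable def indVec {n : ℕ} (deg : Fin n → ℝ) (S : Finset (Fin n)) :
    EuclideanSpace ℝ (Fin n) :=
  WithLp.toLp 2 (fun v => if v ∈ S then Real.sqrt (deg v) else 0)

/-- The normalised indicator vector `D^{1/2} χ_S / ‖D^{1/2} χ_S‖` of a cluster `S`. -/
noncomputable def gbarVec {n : ℕ} (deg : Fin n → ℝ) (S : Finset (Fin n)) :
    EuclideanSpace ℝ (Fin n) :=
  ‖indVec deg S‖⁻¹ • indVec deg S

lemma aux_norm_sub_proj {E : Type*} [NormedAddCommGroup E] [InnerProductSpace ℝ E]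
    {ι : Type*} [Fintype ι] {g : ι → E} (hg : Orthonormal ℝ g) (x : E) :
    ‖x - ∑ i, ⟪x, g i⟫ • g i‖ ^ 2 = ‖x‖ ^ 2 - ∑ i, ⟪x, g i⟫ ^ 2 := by
  have h1 : ⟪x, ∑ i, ⟪x, g i⟫ • g i⟫ = ∑ i, ⟪x, g i⟫ ^ 2 := by
    rw [inner_sum]
    exact Finset.sum_congr rfl fun i _ => by rw [real_inner_smul_right]; ring
  have h2 : ‖∑ i, ⟪x, g i⟫ • g i‖ ^ 2 = ∑ i, ⟪x, g i⟫ ^ 2 := by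
    rw [← real_inner_self_eq_norm_sq, hg.inner_sum]
    simp [sq]
  rw [norm_sub_sq_real, h1, h2]; ring

lemma aux_expand {n : ℕ} (hn : 0 < n) (f : Fin n → EuclideanSpace ℝ (Fin n))
    (hf : Orthonormal ℝ f) (x : EuclideanSpace ℝ (Fin n)) :
    ∑ j, ⟪f j, x⟫ • f j = x := by
  haveI : Nonempty (Fin n) := ⟨⟨0, hn⟩⟩
  have hcard : Fintype.card (Fin n) = Module.finrank ℝ (EuclideanSpace ℝ (Fin n)) := by simp
  let b := (basisOfOrthonormalOfCardEqFinrank hf hcard).toOrthonormalBasis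
    (by rwa [coe_basisOfOrthonormalOfCardEqFinrank])
  have hcoe : ⇑b = f := by
    rw [Module.Basis.coe_toOrthonormalBasis, coe_basisOfOrthonormalOfCardEqFinrank]
  have h := b.sum_repr' x
  rw [hcoe] at h
  exact h

lemma aux_sq_sum {m : ℕ} (x : EuclideanSpace ℝ (Fin m)) : ‖x‖ ^ 2 = ∑ u, x u ^ 2 := by
  rw [EuclideanSpace.norm_eq, Real.sq_sqrt (by positivity)]
  simp [Real.norm_eq_abs, sq_abs]

/-- The total `k`-means cost of the spectral embedding with respect to the
approximate cluster centres is bounded by `k/Υ(k)` (Lemma 4.4). -/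
theorem kmeans_cost_bound
    {n k : ℕ} (hk : 0 < k) (hkn : k < n)
    (w : Fin n → Fin n → ℝ)
    (hsymm : ∀ u v, w u v = w v u)
    (hnonneg : ∀ u v, 0 ≤ w u v)
    (deg : Fin n → ℝ) (hdeg : ∀ u, deg u = ∑ v, w u v)
    (hdegpos : ∀ u, 0 < deg u)
    -- the normalised Laplacian `N = I - D^{-1/2} A D^{-1/2}`
    (N : Matrix (Fin n) (Fin n) ℝ)
    (hN : ∀ u v, N u v =
      (if u = v then (1 : ℝ) else 0) - w u v / (Real.sqrt (deg u) * Real.sqrt (deg v)))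
    -- its eigenvalues `lam 0 ≤ … ≤ lam (n-1)` with orthonormal eigenvectors `f`
    (lam : Fin n → ℝ) (hlam : Monotone lam)
    (f : Fin n → EuclideanSpace ℝ (Fin n))
    (hf : Orthonormal ℝ f)
    (heig : ∀ i, N.mulVec (f i) = lam i • (f i))
    -- `S` is a partition attaining the `k`-way expansion `ρ(k)`
    (S : Fin k → Finset (Fin n)) (hS : IsPartition S)
    (rho : ℝ)
    (hrho : rho = ⨆ i, gCond w deg (S i))
    (hopt : ∀ T : Fin k → Finset (Fin n), IsPartition T → rho ≤ ⨆ i, gCond w deg (T i))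
    (hrhopos : 0 < rho)
    (hlampos : 0 < lam ⟨k, hkn⟩)
    -- `Υ(k) = λ_{k+1} / ρ(k)`
    (Upsilon : ℝ) (hU : Upsilon = lam ⟨k, hkn⟩ / rho)
    -- the normalised indicator vectors of the clusters
    (gbar : Fin k → EuclideanSpace ℝ (Fin n))
    (hgbar : ∀ i, gbar i = gbarVec deg (S i))
    -- the spectral embedding `F(u) = (f_1(u), …, f_k(u))/√deg(u)`
    (F : Fin n → EuclideanSpace ℝ (Fin k))
    (hF : ∀ u j, F u j = f (Fin.castLE hkn.le j) u / Real.sqrt (deg u))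
    -- the approximate cluster centres `p^(i)(j) = ⟨f_j, ḡ_i⟩ / √vol(S_i)`
    (p : Fin k → EuclideanSpace ℝ (Fin k))
    (hp : ∀ i j, p i j = ⟪f (Fin.castLE hkn.le j), gbar i⟫ / Real.sqrt (gVol deg (S i))) :
    ∑ i : Fin k, ∑ u ∈ S i, deg u * ‖F u - p i‖ ^ 2 ≤ k / Upsilon := by
  obtain ⟨hSne, hSdisj, hScover⟩ := hS
  have hnpos : 0 < n := hk.trans hkn
  have hip : ∀ x y : EuclideanSpace ℝ (Fin n), ⟪x, y⟫ = ∑ u, x u * y u := fun x y => by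
    simp [PiLp.inner_apply, RCLike.inner_apply, conj_trivial]
    exact Finset.sum_congr rfl fun _ _ => mul_comm _ _
  have hsqd : ∀ u, Real.sqrt (deg u) ^ 2 = deg u := fun u => Real.sq_sqrt (hdegpos u).le
  have hsd : ∀ u, (0:ℝ) < Real.sqrt (deg u) := fun u => Real.sqrt_pos.2 (hdegpos u)
  have hvolpos : ∀ i, 0 < gVol deg (S i) := fun i =>
    Finset.sum_pos (fun u _ => hdegpos u) (hSne i)
  have hsv : ∀ i, (0:ℝ) < Real.sqrt (gVol deg (S i)) := fun i => Real.sqrt_pos.2 (hvolpos i)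
  -- entrywise description of `gbar`
  have hgbar_apply : ∀ i v, gbar i v =
      if v ∈ S i then Real.sqrt (deg v) / Real.sqrt (gVol deg (S i)) else 0 := by
    intro i v
    have hnorm : ‖indVec deg (S i)‖ = Real.sqrt (gVol deg (S i)) := by
      rw [EuclideanSpace.norm_eq]
      congr 1
      have h1 : ∀ v, ‖indVec deg (S i) v‖ ^ 2 = if v ∈ S i then deg v else 0 := by
        intro v; by_cases h : v ∈ S i <;>
          simp [indVec, h, Real.norm_eq_abs, sq_abs, Real.sq_sqrt (hdegpos v).le]
      simp_rw [h1]
      rw [Finset.sum_ite_mem, Finset.univ_inter]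
      rfl
    rw [hgbar i]
    show ‖indVec deg (S i)‖⁻¹ • indVec deg (S i) v = _
    by_cases h : v ∈ S i
    · rw [hnorm]; simp [indVec, h, hnorm, smul_eq_mul, div_eq_inv_mul]
    · simp [indVec, h, hnorm]
  -- orthonormality of the `gbar` family
  have hgON : Orthonormal ℝ gbar := by
    rw [orthonormal_iff_ite]
    intro i j
    rw [hip]
    by_cases h : i = j
    · subst h
      simp only [if_pos rfl]
      have h1 : ∀ v, gbar i v * gbar i v = if v ∈ S i then deg v / gVol deg (S i) else 0 := by
        intro v
        rw [hgbar_apply]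
        by_cases hv : v ∈ S i
        · rw [if_pos hv, if_pos hv, div_mul_div_comm,
            Real.mul_self_sqrt (hdegpos v).le, Real.mul_self_sqrt (hvolpos i).le]
        · simp [hv]
      simp_rw [h1]
      rw [Finset.sum_ite_mem, Finset.univ_inter, ← Finset.sum_div]
      exact div_self (ne_of_gt (hvolpos i))
    · rw [if_neg h]
      refine Finset.sum_eq_zero fun v _ => ?_
      rw [hgbar_apply, hgbar_apply]
      by_cases hv : v ∈ S i
      · rw [if_neg (Finset.disjoint_left.1 (hSdisj i j h) hv), mul_zero]
      · rw [if_neg hv, zero_mul]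
  have hgnorm : ∀ i, ‖gbar i‖ = 1 := hgON.1
  have hfnorm : ∀ j, ‖f j‖ = 1 := hf.1
  -- expansion of `gbar` in the eigenbasis
  have hgexp : ∀ i, ∑ j, (⟪f j, gbar i⟫ : ℝ) • f j = gbar i := fun i =>
    aux_expand hnpos f hf (gbar i)
  -- Parseval
  have hps : ∀ i, ∑ j : Fin n, (⟪f j, gbar i⟫ : ℝ) ^ 2 = 1 := by
    intro i
    have h1 := hf.inner_sum (fun j => (⟪f j, gbar i⟫ : ℝ)) (fun j => (⟪f j, gbar i⟫ : ℝ)) univ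
    rw [aux_expand hnpos f hf (gbar i)] at h1
    have h2 : ⟪gbar i, gbar i⟫ = (1 : ℝ) := by
      rw [real_inner_self_eq_norm_sq, hgnorm i]; norm_num
    rw [h2] at h1
    simp only [conj_trivial] at h1
    rw [h1]
    exact Finset.sum_congr rfl fun j _ => by rw [sq]
  -- summing over the partition
  have hpart : ∀ g : Fin n → ℝ, ∑ i, ∑ u ∈ S i, g u = ∑ u, g u := by
    intro g
    have hU : (univ : Finset (Fin n)) = univ.biUnion S := by
      ext v; simp only [mem_univ, mem_biUnion, true_iff, true_and]
      exact hScover v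
    rw [hU, Finset.sum_biUnion]
    intro i _ j _ hij
    exact hSdisj i j hij
  have hmulvec : ∀ (x : EuclideanSpace ℝ (Fin n)) u, N.mulVec x u = ∑ v, N u v * x v := by
    intro x u; simp [Matrix.mulVec, dotProduct]
  -- Step A: the cost equals the projection defect
  have hA : ∑ i : Fin k, ∑ u ∈ S i, deg u * ‖F u - p i‖ ^ 2
      = ∑ i : Fin k, (1 - ∑ j : Fin k, (⟪f (Fin.castLE hkn.le j), gbar i⟫ : ℝ) ^ 2) := by
    have htermA : ∀ i, ∀ u ∈ S i, deg u * ‖F u - p i‖ ^ 2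
        = ∑ j : Fin k, (f (Fin.castLE hkn.le j) u
            - ⟪f (Fin.castLE hkn.le j), gbar i⟫ * gbar i u) ^ 2 := by
      intro i u hu
      rw [aux_sq_sum (F u - p i), Finset.mul_sum]
      refine Finset.sum_congr rfl fun j _ => ?_
      have happ : (F u - p i) j = F u j - p i j := rfl
      rw [happ, hF, hp, hgbar_apply i u, if_pos hu]
      have e : Real.sqrt (deg u) * (f (Fin.castLE hkn.le j) u / Real.sqrt (deg u)
          - ⟪f (Fin.castLE hkn.le j), gbar i⟫ / Real.sqrt (gVol deg (S i)))
          = f (Fin.castLE hkn.le j) u - ⟪f (Fin.castLE hkn.le j), gbar i⟫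
            * (Real.sqrt (deg u) / Real.sqrt (gVol deg (S i))) := by
        rw [mul_sub, mul_div_cancel₀ _ (ne_of_gt (hsd u))]
        ring
      calc deg u * (f (Fin.castLE hkn.le j) u / Real.sqrt (deg u)
            - ⟪f (Fin.castLE hkn.le j), gbar i⟫ / Real.sqrt (gVol deg (S i))) ^ 2
          = (Real.sqrt (deg u) * (f (Fin.castLE hkn.le j) u / Real.sqrt (deg u)
            - ⟪f (Fin.castLE hkn.le j), gbar i⟫ / Real.sqrt (gVol deg (S i)))) ^ 2 := by
            rw [mul_pow, Real.sq_sqrt (hdegpos u).le]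
        _ = _ := by rw [e]
    have htermB : ∀ (j : Fin k) i, ∀ u ∈ S i,
        (⟪f (Fin.castLE hkn.le j), gbar i⟫ : ℝ) * gbar i u
          = ∑ i' : Fin k, (⟪f (Fin.castLE hkn.le j), gbar i'⟫ : ℝ) * gbar i' u := by
      intro j i u hu
      symm
      refine Finset.sum_eq_single i (fun i' _ hne => ?_) (fun h => absurd (mem_univ i) h)
      rw [hgbar_apply i' u, if_neg (Finset.disjoint_left.1 (hSdisj i' i hne) · hu), mul_zero]
    have hnrm : ∀ j : Fin k, ∑ u, (f (Fin.castLE hkn.le j) u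
        - ∑ i' : Fin k, (⟪f (Fin.castLE hkn.le j), gbar i'⟫ : ℝ) * gbar i' u) ^ 2
        = 1 - ∑ i : Fin k, (⟪f (Fin.castLE hkn.le j), gbar i⟫ : ℝ) ^ 2 := by
      intro j
      have hv : ∀ u, (f (Fin.castLE hkn.le j)
          - ∑ i' : Fin k, (⟪f (Fin.castLE hkn.le j), gbar i'⟫ : ℝ) • gbar i') u
          = f (Fin.castLE hkn.le j) u
            - ∑ i' : Fin k, (⟪f (Fin.castLE hkn.le j), gbar i'⟫ : ℝ) * gbar i' u := by
        intro u
        have h3 : (∑ i' : Fin k, (⟪f (Fin.castLE hkn.le j), gbar i'⟫ : ℝ) • gbar i') u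
            = ∑ i' : Fin k, (⟪f (Fin.castLE hkn.le j), gbar i'⟫ : ℝ) * gbar i' u := by
          rw [WithLp.ofLp_sum, Finset.sum_apply]
          rfl
        rw [← h3]
        rfl
      have h1 := aux_norm_sub_proj hgON (f (Fin.castLE hkn.le j))
      rw [aux_sq_sum, hfnorm, one_pow] at h1
      rw [← h1]
      exact Finset.sum_congr rfl fun u _ => by rw [hv u]
    calc ∑ i : Fin k, ∑ u ∈ S i, deg u * ‖F u - p i‖ ^ 2
        = ∑ i : Fin k, ∑ u ∈ S i, ∑ j : Fin k, (f (Fin.castLE hkn.le j) u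
            - ∑ i' : Fin k, (⟪f (Fin.castLE hkn.le j), gbar i'⟫ : ℝ) * gbar i' u) ^ 2 := by
          refine Finset.sum_congr rfl fun i _ => Finset.sum_congr rfl fun u hu => ?_
          rw [htermA i u hu]
          exact Finset.sum_congr rfl fun j _ => by rw [htermB j i u hu]
      _ = ∑ i : Fin k, ∑ j : Fin k, ∑ u ∈ S i, (f (Fin.castLE hkn.le j) u
            - ∑ i' : Fin k, (⟪f (Fin.castLE hkn.le j), gbar i'⟫ : ℝ) * gbar i' u) ^ 2 :=
          Finset.sum_congr rfl fun i _ => Finset.sum_comm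
      _ = ∑ j : Fin k, ∑ i : Fin k, ∑ u ∈ S i, (f (Fin.castLE hkn.le j) u
            - ∑ i' : Fin k, (⟪f (Fin.castLE hkn.le j), gbar i'⟫ : ℝ) * gbar i' u) ^ 2 :=
          Finset.sum_comm
      _ = ∑ j : Fin k, (1 - ∑ i : Fin k, (⟪f (Fin.castLE hkn.le j), gbar i⟫ : ℝ) ^ 2) := by
          refine Finset.sum_congr rfl fun j _ => ?_
          rw [hpart, hnrm]
      _ = ∑ i : Fin k, (1 - ∑ j : Fin k, (⟪f (Fin.castLE hkn.le j), gbar i⟫ : ℝ) ^ 2) := by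
          rw [Finset.sum_sub_distrib, Finset.sum_sub_distrib, Finset.sum_comm]
  -- the quadratic form of `N`
  have hQF : ∀ x : EuclideanSpace ℝ (Fin n), ⟪x, (WithLp.toLp 2 (N.mulVec x) : EuclideanSpace ℝ (Fin n))⟫ =
      2⁻¹ * ∑ u, ∑ v, w u v *
        (x u / Real.sqrt (deg u) - x v / Real.sqrt (deg v)) ^ 2 := by
    intro x
    have ha : ∑ u, ∑ v, w u v * (x u / Real.sqrt (deg u)) ^ 2 = ∑ u, x u ^ 2 := by
      refine Finset.sum_congr rfl fun u _ => ?_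
      rw [← Finset.sum_mul, ← hdeg u, div_pow, hsqd u]
      exact mul_div_cancel₀ _ (ne_of_gt (hdegpos u))
    have hb : ∑ u, ∑ v, w u v * (x v / Real.sqrt (deg v)) ^ 2 = ∑ u, x u ^ 2 := by
      rw [Finset.sum_comm]
      calc ∑ v, ∑ u, w u v * (x v / Real.sqrt (deg v)) ^ 2
          = ∑ v, ∑ u, w v u * (x v / Real.sqrt (deg v)) ^ 2 :=
            Finset.sum_congr rfl fun v _ => Finset.sum_congr rfl fun u _ => by rw [hsymm]
        _ = ∑ u, x u ^ 2 := ha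
    have hL : ⟪x, (WithLp.toLp 2 (N.mulVec x) : EuclideanSpace ℝ (Fin n))⟫
        = (∑ u, x u ^ 2) - ∑ u, ∑ v, w u v * (x u * x v) /
            (Real.sqrt (deg u) * Real.sqrt (deg v)) := by
      rw [hip]
      simp only [WithLp.ofLp_toLp]
      have h1 : ∀ u, x u * N.mulVec x u
          = (∑ v, if u = v then x u * x v else 0)
            - ∑ v, w u v * (x u * x v) / (Real.sqrt (deg u) * Real.sqrt (deg v)) := by
        intro u
        rw [hmulvec, Finset.mul_sum, ← Finset.sum_sub_distrib]
        refine Finset.sum_congr rfl fun v _ => ?_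
        rw [hN]
        by_cases h : u = v
        · subst h; simp; ring
        · simp [h]; ring
      simp_rw [h1]
      rw [Finset.sum_sub_distrib]
      congr 1
      refine Finset.sum_congr rfl fun u _ => ?_
      rw [Finset.sum_ite_eq, if_pos (mem_univ u), sq]
    have hpt : ∀ u v : Fin n, w u v * (x u / Real.sqrt (deg u) - x v / Real.sqrt (deg v)) ^ 2
        = w u v * (x u / Real.sqrt (deg u)) ^ 2 + w u v * (x v / Real.sqrt (deg v)) ^ 2
          - 2 * (w u v * (x u * x v) / (Real.sqrt (deg u) * Real.sqrt (deg v))) := by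
      intro u v
      have h1 := (hsd u).ne'
      have h2 := (hsd v).ne'
      field_simp
      ring
    simp_rw [hpt]
    rw [hL]
    simp_rw [Finset.sum_sub_distrib, Finset.sum_add_distrib]
    rw [ha, hb]
    simp_rw [← Finset.mul_sum]
    ring
  -- nonnegativity of the eigenvalues
  have hlam_eq : ∀ j, lam j = ⟪f j, (WithLp.toLp 2 (N.mulVec (f j)) : EuclideanSpace ℝ (Fin n))⟫ := by
    intro j
    rw [heig j, WithLp.toLp_smul, WithLp.toLp_ofLp, real_inner_smul_right, real_inner_self_eq_norm_sq, hfnorm j]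
    norm_num
  have hlam_nonneg : ∀ j, 0 ≤ lam j := by
    intro j
    rw [hlam_eq j, hQF]
    have : 0 ≤ ∑ u, ∑ v, w u v *
        (f j u / Real.sqrt (deg u) - f j v / Real.sqrt (deg v)) ^ 2 :=
      Finset.sum_nonneg fun u _ => Finset.sum_nonneg fun v _ =>
        mul_nonneg (hnonneg u v) (sq_nonneg _)
    positivity
  -- symmetry of `N`
  have hNsymm : ∀ u v, N u v = N v u := by
    intro u v
    rw [hN, hN, hsymm]
    by_cases h : u = v
    · subst h; ring
    · rw [if_neg h, if_neg (Ne.symm h), mul_comm (Real.sqrt (deg u))]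
  have hswap : ∀ x y : EuclideanSpace ℝ (Fin n),
      ⟪x, (WithLp.toLp 2 (N.mulVec y) : EuclideanSpace ℝ (Fin n))⟫
        = ⟪y, (WithLp.toLp 2 (N.mulVec x) : EuclideanSpace ℝ (Fin n))⟫ := by
    intro x y
    rw [hip, hip]
    simp only [WithLp.ofLp_toLp]
    simp_rw [hmulvec, Finset.mul_sum]
    rw [Finset.sum_comm]
    exact Finset.sum_congr rfl fun u _ => Finset.sum_congr rfl fun v _ => by
      rw [hNsymm]; ring
  -- eigen-decomposition of the quadratic form of `gbar i`
  have hqe : ∀ i, ⟪gbar i, (WithLp.toLp 2 (N.mulVec (gbar i)) : EuclideanSpace ℝ (Fin n))⟫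
      = ∑ j, lam j * (⟪f j, gbar i⟫ : ℝ) ^ 2 := by
    intro i
    conv_lhs => rw [← hgexp i]
    rw [sum_inner]
    refine Finset.sum_congr rfl fun j _ => ?_
    rw [real_inner_smul_left, hswap, heig j, WithLp.toLp_smul, WithLp.toLp_ofLp, real_inner_smul_right, real_inner_comm]
    rw [hgexp i]
    ring
  -- direct computation of the quadratic form of `gbar i`
  have hqd : ∀ i, ⟪gbar i, (WithLp.toLp 2 (N.mulVec (gbar i)) : EuclideanSpace ℝ (Fin n))⟫
      = gCut w (S i) (S i)ᶜ / gVol deg (S i) := by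
    intro i
    have hgsq : ∑ u, gbar i u * gbar i u = 1 := by
      have h4 := hip (gbar i) (gbar i)
      rw [real_inner_self_eq_norm_sq, hgnorm i] at h4
      rw [← h4]; norm_num
    have hL : ⟪gbar i, (WithLp.toLp 2 (N.mulVec (gbar i)) : EuclideanSpace ℝ (Fin n))⟫
        = (∑ u, gbar i u * gbar i u)
          - ∑ u, ∑ v, w u v * (gbar i u * gbar i v) /
              (Real.sqrt (deg u) * Real.sqrt (deg v)) := by
      rw [hip]
      simp only [WithLp.ofLp_toLp]
      have h1 : ∀ u, gbar i u * N.mulVec (gbar i) u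
          = (∑ v, if u = v then gbar i u * gbar i v else 0)
            - ∑ v, w u v * (gbar i u * gbar i v) /
                (Real.sqrt (deg u) * Real.sqrt (deg v)) := by
        intro u
        rw [hmulvec, Finset.mul_sum, ← Finset.sum_sub_distrib]
        refine Finset.sum_congr rfl fun v _ => ?_
        rw [hN]
        by_cases h : u = v
        · subst h; simp; ring
        · simp [h]; ring
      simp_rw [h1]
      rw [Finset.sum_sub_distrib]
      congr 1
      refine Finset.sum_congr rfl fun u _ => ?_
      rw [Finset.sum_ite_eq, if_pos (mem_univ u)]
    have hcross : ∑ u, ∑ v, w u v * (gbar i u * gbar i v) /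
        (Real.sqrt (deg u) * Real.sqrt (deg v))
        = gCut w (S i) (S i) / gVol deg (S i) := by
      have hT : ∀ u v, u ∈ S i → v ∈ S i → w u v * (gbar i u * gbar i v) /
          (Real.sqrt (deg u) * Real.sqrt (deg v)) = w u v / gVol deg (S i) := by
        intro u v hu hv
        rw [hgbar_apply, hgbar_apply, if_pos hu, if_pos hv]
        have h1 := (hsd u).ne'
        have h2 := (hsd v).ne'
        rw [div_mul_div_comm]
        rw [show Real.sqrt (gVol deg (S i)) * Real.sqrt (gVol deg (S i))
          = gVol deg (S i) from Real.mul_self_sqrt (hvolpos i).le]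
        calc w u v * (Real.sqrt (deg u) * Real.sqrt (deg v) / gVol deg (S i)) /
            (Real.sqrt (deg u) * Real.sqrt (deg v))
            = w u v / gVol deg (S i) * (Real.sqrt (deg u) * Real.sqrt (deg v) /
              (Real.sqrt (deg u) * Real.sqrt (deg v))) := by ring
          _ = w u v / gVol deg (S i) := by rw [div_self (mul_ne_zero h1 h2), mul_one]
      have houter : ∀ u, u ∉ S i → ∑ v, w u v * (gbar i u * gbar i v) /
          (Real.sqrt (deg u) * Real.sqrt (deg v)) = 0 := by
        intro u hu
        refine Finset.sum_eq_zero fun v _ => ?_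
        rw [hgbar_apply i u, if_neg hu]
        ring
      rw [show (∑ u, ∑ v, w u v * (gbar i u * gbar i v) /
          (Real.sqrt (deg u) * Real.sqrt (deg v)))
          = ∑ u ∈ S i, ∑ v, w u v * (gbar i u * gbar i v) /
            (Real.sqrt (deg u) * Real.sqrt (deg v)) from
        (Finset.sum_subset (Finset.subset_univ _) fun u _ hu => houter u hu).symm]
      rw [gCut, Finset.sum_div]
      refine Finset.sum_congr rfl fun u hu => ?_
      rw [show (∑ v, w u v * (gbar i u * gbar i v) /
          (Real.sqrt (deg u) * Real.sqrt (deg v)))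
          = ∑ v ∈ S i, w u v * (gbar i u * gbar i v) /
            (Real.sqrt (deg u) * Real.sqrt (deg v)) from
        (Finset.sum_subset (Finset.subset_univ _) fun v _ hv => by
          rw [hgbar_apply i v, if_neg hv]; ring).symm]
      rw [Finset.sum_div]
      exact Finset.sum_congr rfl fun v hv => hT u v hu hv
    have hvsplit : gVol deg (S i) = gCut w (S i) (S i) + gCut w (S i) (S i)ᶜ := by
      rw [gVol, gCut, gCut, ← Finset.sum_add_distrib]
      refine Finset.sum_congr rfl fun u hu => ?_
      rw [hdeg u, ← Finset.sum_add_sum_compl (S i) (w u)]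
    rw [hL, hgsq, hcross]
    rw [eq_div_iff (ne_of_gt (hvolpos i)), sub_mul, one_mul,
      div_mul_cancel₀ _ (ne_of_gt (hvolpos i))]
    rw [hvsplit]; ring
  have hsum_eig : ∀ i, ∑ j : Fin n, lam j * (⟪f j, gbar i⟫ : ℝ) ^ 2
      = gCut w (S i) (S i)ᶜ / gVol deg (S i) := fun i => (hqe i).symm.trans (hqd i)
  -- the quadratic form of a cluster indicator is at most rho
  have hcut_rho : ∀ i, gCut w (S i) (S i)ᶜ / gVol deg (S i) ≤ rho := by
    intro i
    have hcutnn : 0 ≤ gCut w (S i) (S i)ᶜ :=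
      Finset.sum_nonneg fun u _ => Finset.sum_nonneg fun v _ => hnonneg u v
    by_cases hc : ((S i)ᶜ : Finset (Fin n)).Nonempty
    · have hvolc : 0 < gVol deg ((S i)ᶜ) := Finset.sum_pos (fun u _ => hdegpos u) hc
      have hmin : 0 < min (gVol deg (S i)) (gVol deg ((S i)ᶜ)) := lt_min (hvolpos i) hvolc
      have h1 : gCut w (S i) (S i)ᶜ / gVol deg (S i) ≤ gCond w deg (S i) :=
        div_le_div_of_nonneg_left hcutnn hmin (min_le_left _ _)
      have h2 : gCond w deg (S i) ≤ ⨆ j, gCond w deg (S j) :=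
        le_ciSup (f := fun j => gCond w deg (S j))
          (Set.Finite.bddAbove (Set.finite_range _)) i
      rw [hrho]
      exact h1.trans h2
    · rw [Finset.not_nonempty_iff_eq_empty.1 hc]
      rw [show gCut w (S i) (∅ : Finset (Fin n)) = 0 by simp [gCut]]
      rw [zero_div]
      exact hrhopos.le
  -- Step C: each projection defect is at most rho / lambda_{k+1}
  have hstepC : ∀ i, 1 - ∑ j : Fin k, (⟪f (Fin.castLE hkn.le j), gbar i⟫ : ℝ) ^ 2
      ≤ rho / lam ⟨k, hkn⟩ := by
    intro i
    have himg : ∑ j : Fin k, (⟪f (Fin.castLE hkn.le j), gbar i⟫ : ℝ) ^ 2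
        = ∑ j ∈ (univ : Finset (Fin k)).image (Fin.castLE hkn.le),
            (⟪f j, gbar i⟫ : ℝ) ^ 2 := by
      rw [Finset.sum_image (fun a _ b _ hab => Fin.castLE_injective hkn.le hab)]
    have hsplit := Finset.sum_add_sum_compl
      ((univ : Finset (Fin k)).image (Fin.castLE hkn.le))
      (fun j => (⟪f j, gbar i⟫ : ℝ) ^ 2)
    rw [hps i] at hsplit
    have h0 : 1 - ∑ j : Fin k, (⟪f (Fin.castLE hkn.le j), gbar i⟫ : ℝ) ^ 2
        = ∑ j ∈ ((univ : Finset (Fin k)).image (Fin.castLE hkn.le))ᶜ,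
            (⟪f j, gbar i⟫ : ℝ) ^ 2 := by
      rw [himg]; linarith
    rw [h0, le_div_iff₀ hlampos]
    have hmem : ∀ j ∈ ((univ : Finset (Fin k)).image (Fin.castLE hkn.le))ᶜ, k ≤ (j : ℕ) := by
      intro j hj
      rw [Finset.mem_compl] at hj
      by_contra h
      push_neg at h
      exact hj (Finset.mem_image.2 ⟨⟨(j : ℕ), h⟩, mem_univ _, by ext; simp⟩)
    calc (∑ j ∈ ((univ : Finset (Fin k)).image (Fin.castLE hkn.le))ᶜ,
            (⟪f j, gbar i⟫ : ℝ) ^ 2) * lam ⟨k, hkn⟩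
        = ∑ j ∈ ((univ : Finset (Fin k)).image (Fin.castLE hkn.le))ᶜ,
            lam ⟨k, hkn⟩ * (⟪f j, gbar i⟫ : ℝ) ^ 2 := by
          rw [Finset.sum_mul]; exact Finset.sum_congr rfl fun j _ => by ring
      _ ≤ ∑ j ∈ ((univ : Finset (Fin k)).image (Fin.castLE hkn.le))ᶜ,
            lam j * (⟪f j, gbar i⟫ : ℝ) ^ 2 :=
          Finset.sum_le_sum fun j hj =>
            mul_le_mul_of_nonneg_right (hlam (by
              show (⟨k, hkn⟩ : Fin n) ≤ j
              exact hmem j hj)) (sq_nonneg _)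
      _ ≤ ∑ j : Fin n, lam j * (⟪f j, gbar i⟫ : ℝ) ^ 2 :=
          Finset.sum_le_sum_of_subset_of_nonneg (Finset.subset_univ _)
            (fun j _ _ => mul_nonneg (hlam_nonneg j) (sq_nonneg _))
      _ = gCut w (S i) (S i)ᶜ / gVol deg (S i) := hsum_eig i
      _ ≤ rho := hcut_rho i
  rw [hA]
  calc ∑ i : Fin k, (1 - ∑ j : Fin k, (⟪f (Fin.castLE hkn.le j), gbar i⟫ : ℝ) ^ 2)
      ≤ ∑ _i : Fin k, rho / lam ⟨k, hkn⟩ := Finset.sum_le_sum fun i _ => hstepC i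
    _ = k / Upsilon := by
        rw [Finset.sum_const, card_univ, Fintype.card_fin, hU, nsmul_eq_mul,
          div_div_eq_mul_div]
        ring
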